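/- Fix a finite measurement scenario. Every strongly contextual no-signalling empirical model e lies in a face F of the no-signalling polytope consisting entirely of strongly contextual models: every model e' in the carrier face of e is also strongly contextual. In particular every strongly contextual model is a convex combination of strongly contextual vertices. -/

import Mathlib

open Finset

variable {X O : Type*} [Fintype X] [DecidableEq X] [Fintype O] [DecidableEq O]

/-- The index of coordinates for empirical models over the scenario `(X, M, O)`:
one coordinate per context `C ∈ M` and assignment `s : C → O`. -/
abbrev Coord (M : Finset (Finset X)) (O : Type*) :=
  Σ C : {C : Finset X // C ∈ M}, ({x // x ∈ C.1} → O)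

/-- Restriction of an assignment on `C` to the overlap `C ∩ C'`. -/
def restrictL {M : Finset (Finset X)} (C C' : {C : Finset X // C ∈ M})
    (t : {x // x ∈ C.1} → O) : {x // x ∈ C.1 ∩ C'.1} → O :=
  fun x => t ⟨x.1, (Finset.mem_inter.mp x.2).1⟩

/-- Restriction of an assignment on `C'` to the overlap `C ∩ C'`. -/
def restrictR {M : Finset (Finset X)} (C C' : {C : Finset X // C ∈ M})
    (t : {x // x ∈ C'.1} → O) : {x // x ∈ C.1 ∩ C'.1} → O :=
  fun x => t ⟨x.1, (Finset.mem_inter.mp x.2).2⟩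

/-- `v` is a no-signalling empirical model: non-negative, normalized on each
context, and with agreeing marginals on overlaps of contexts. -/
def IsNSModel {M : Finset (Finset X)} (v : Coord M O → ℝ) : Prop :=
  (∀ i, 0 ≤ v i) ∧
  (∀ C : {C : Finset X // C ∈ M}, ∑ s : ({x // x ∈ C.1} → O), v ⟨C, s⟩ = 1) ∧
  (∀ C C' : {C : Finset X // C ∈ M}, ∀ s : ({x // x ∈ C.1 ∩ C'.1} → O),
    ∑ t ∈ Finset.univ.filter (fun t => restrictL C C' t = s), v ⟨C, t⟩ =
    ∑ t' ∈ Finset.univ.filter (fun t' => restrictR C C' t' = s), v ⟨C', t'⟩)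

/-- A model is strongly contextual if no global assignment is consistent with
its support. -/
def StronglyContextual {M : Finset (Finset X)} (v : Coord M O → ℝ) : Prop :=
  ¬ ∃ g : X → O, ∀ C : {C : Finset X // C ∈ M}, 0 < v ⟨C, fun x => g x.1⟩

/-- `F` is a face of `P`: the zero set in `P` of a valid linear inequality. -/
def IsFace {ι : Type*} [Fintype ι] (P F : Set (ι → ℝ)) : Prop :=
  ∃ (a : ι → ℝ) (b : ℝ), (∀ x ∈ P, b ≤ ∑ i, a i * x i) ∧
    F = {x ∈ P | ∑ i, a i * x i = b}

/-- Affine combinations along a direction `y - z` of NS models stay NS models,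
provided they are non-negative. -/
private lemma combo_NSModel {M : Finset (Finset X)} {x y z : Coord (X := X) M O → ℝ}
    (hx : IsNSModel x) (hy : IsNSModel y) (hz : IsNSModel z) (t : ℝ)
    (h0 : ∀ i, 0 ≤ x i + t * (y i - z i)) :
    IsNSModel (fun i => x i + t * (y i - z i)) := by
  refine ⟨h0, fun C => ?_, fun C C' s => ?_⟩
  · rw [Finset.sum_add_distrib, ← Finset.mul_sum, Finset.sum_sub_distrib,
      hx.2.1 C, hy.2.1 C, hz.2.1 C]
    ring
  · rw [Finset.sum_add_distrib, Finset.sum_add_distrib, ← Finset.mul_sum, ← Finset.mul_sum,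
      Finset.sum_sub_distrib, Finset.sum_sub_distrib, hx.2.2 C C' s, hy.2.2 C C' s,
      hz.2.2 C C' s]

/-- If two NS models differ, the difference has a strictly negative coordinate. -/
private lemma exists_neg_coord {M : Finset (Finset X)} {y z : Coord (X := X) M O → ℝ}
    (hy : IsNSModel y) (hz : IsNSModel z) (hne : y ≠ z) :
    ∃ i, y i < z i := by
  obtain ⟨i, hi⟩ := Function.ne_iff.mp hne
  by_contra h
  push_neg at h
  have hsum : ∑ s : ({x // x ∈ i.1.1} → O), (y ⟨i.1, s⟩ - z ⟨i.1, s⟩) = 0 := by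
    rw [Finset.sum_sub_distrib, hy.2.1 i.1, hz.2.1 i.1, sub_self]
  have hnn : ∀ s ∈ Finset.univ, (0:ℝ) ≤ y ⟨i.1, s⟩ - z ⟨i.1, s⟩ :=
    fun s _ => sub_nonneg.mpr (h _)
  have hzero := (Finset.sum_eq_zero_iff_of_nonneg hnn).mp hsum i.2 (Finset.mem_univ _)
  exact hi (sub_eq_zero.mp hzero)

open scoped Classical in
/-- Pushing an NS model along a direction `y - z` (supported inside the support of `x`,
with some strictly negative coordinate) until a coordinate hits zero. -/
private lemma push_lemma {M : Finset (Finset X)} {x y z : Coord (X := X) M O → ℝ}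
    (hx : IsNSModel x) (hy : IsNSModel y) (hz : IsNSModel z)
    (hsupp : ∀ i, x i = 0 → y i = 0 ∧ z i = 0)
    (hneg : ∃ i, y i < z i) :
    ∃ (w : Coord (X := X) M O → ℝ) (t : ℝ), 0 < t ∧ IsNSModel w ∧
      (∀ i, w i = x i + t * (y i - z i)) ∧ (∀ i, x i = 0 → w i = 0) ∧
      (Finset.univ.filter fun i => w i ≠ 0).card <
        (Finset.univ.filter fun i => x i ≠ 0).card := by
  have hxpos : ∀ i, y i - z i ≠ 0 → 0 < x i := by
    intro i hd
    rcases (hx.1 i).lt_or_eq with h | h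
    · exact h
    · obtain ⟨h1, h2⟩ := hsupp i h.symm
      exact absurd (by rw [h1, h2, sub_zero]) hd
  obtain ⟨j₀, hj₀⟩ := hneg
  set D : Finset (Coord (X := X) M O) := Finset.univ.filter (fun i => y i < z i) with hD
  have hDne : D.Nonempty := ⟨j₀, by simp [hD, hj₀]⟩
  obtain ⟨i₀, hi₀D, hmin⟩ := Finset.exists_min_image D (fun i => x i / (z i - y i)) hDne
  have hi₀lt : y i₀ < z i₀ := by simpa [hD] using hi₀D
  have hc : 0 < z i₀ - y i₀ := sub_pos.mpr hi₀lt
  have hx0 : 0 < x i₀ := hxpos i₀ (by linarith)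
  set t : ℝ := x i₀ / (z i₀ - y i₀) with htdef
  have ht : 0 < t := div_pos hx0 hc
  set w : Coord (X := X) M O → ℝ := fun i => x i + t * (y i - z i) with hw
  have hnonneg : ∀ i, 0 ≤ w i := by
    intro i
    rcases lt_or_ge (y i) (z i) with h | h
    · have hiD : i ∈ D := by simp [hD, h]
      have hci : 0 < z i - y i := sub_pos.mpr h
      have := (le_div_iff₀ hci).mp (hmin i hiD)
      have e1 : w i = x i - t * (z i - y i) := by rw [hw]; ring
      rw [e1]; linarith
    · exact add_nonneg (hx.1 i) (mul_nonneg ht.le (sub_nonneg.mpr h))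
  have hwi₀ : w i₀ = 0 := by
    have key : t * (y i₀ - z i₀) = -(x i₀) := by
      rw [htdef, div_mul_eq_mul_div, div_eq_iff hc.ne']
      ring
    rw [hw]; simp only []
    rw [key]; ring
  have hsuppw : ∀ i, x i = 0 → w i = 0 := by
    intro i h0
    obtain ⟨h1, h2⟩ := hsupp i h0
    rw [hw]; simp only []
    rw [h0, h1, h2]; ring
  refine ⟨w, t, ht, combo_NSModel hx hy hz t hnonneg, fun i => rfl, hsuppw, ?_⟩
  apply Finset.card_lt_card
  rw [Finset.ssubset_iff_of_subset]
  · refine ⟨i₀, Finset.mem_filter.mpr ⟨Finset.mem_univ _, hx0.ne'⟩, ?_⟩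
    simp [hwi₀]
  · intro j hj
    rw [Finset.mem_filter] at hj ⊢
    refine ⟨Finset.mem_univ _, fun h0 => hj.2 (hsuppw j h0)⟩

open scoped Classical in
/-- A non-extreme NS model is a proper convex combination of two NS models with
strictly smaller support. -/
private lemma shrink {M : Finset (Finset X)} {x : Coord (X := X) M O → ℝ} (hx : IsNSModel x)
    (hnex : x ∉ Set.extremePoints ℝ {v : Coord (X := X) M O → ℝ | IsNSModel v}) :
    ∃ (x₁ x₂ : Coord (X := X) M O → ℝ) (a b : ℝ), IsNSModel x₁ ∧ IsNSModel x₂ ∧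
      (∀ i, x i = 0 → x₁ i = 0) ∧ (∀ i, x i = 0 → x₂ i = 0) ∧
      (Finset.univ.filter fun i => x₁ i ≠ 0).card <
        (Finset.univ.filter fun i => x i ≠ 0).card ∧
      (Finset.univ.filter fun i => x₂ i ≠ 0).card <
        (Finset.univ.filter fun i => x i ≠ 0).card ∧
      0 ≤ a ∧ 0 ≤ b ∧ a + b = 1 ∧ a • x₁ + b • x₂ = x := by
  have hne : ¬ ∀ x₁ ∈ {v : Coord (X := X) M O → ℝ | IsNSModel v},
      ∀ x₂ ∈ {v : Coord (X := X) M O → ℝ | IsNSModel v},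
      x ∈ openSegment ℝ x₁ x₂ → x₁ = x ∧ x₂ = x := by
    intro h
    exact hnex ⟨hx, fun x₁ h₁ x₂ h₂ hseg => (h x₁ h₁ x₂ h₂ hseg).1⟩
  push_neg at hne
  obtain ⟨y, hy, z, hz, hseg, hne2⟩ := hne
  obtain ⟨a, b, ha, hb, hab, hcomb⟩ := hseg
  have hyz : y ≠ z := by
    rintro rfl
    have hyx : y = x := by rw [← hcomb, ← add_smul, hab, one_smul]
    exact (hne2 hyx) hyx
  have hsupp : ∀ i, x i = 0 → y i = 0 ∧ z i = 0 := by
    intro i h0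
    have hxi : a * y i + b * z i = 0 := by
      have := congrFun hcomb i
      simpa [h0] using this
    have h1 : a * y i = 0 := by
      nlinarith [mul_nonneg ha.le (hy.1 i), mul_nonneg hb.le (hz.1 i)]
    have h2 : b * z i = 0 := by linarith
    exact ⟨(mul_eq_zero.mp h1).resolve_left ha.ne',
      (mul_eq_zero.mp h2).resolve_left hb.ne'⟩
  obtain ⟨wp, tp, htp, hwpNS, hwpdef, hwpsupp, hwpcard⟩ :=
    push_lemma hx hy hz hsupp (exists_neg_coord hy hz hyz)
  obtain ⟨wm, tm, htm, hwmNS, hwmdef, hwmsupp, hwmcard⟩ :=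
    push_lemma hx hz hy (fun i h => (hsupp i h).symm) (exists_neg_coord hz hy hyz.symm)
  have hts : 0 < tp + tm := by linarith
  refine ⟨wp, wm, tm / (tp + tm), tp / (tp + tm), hwpNS, hwmNS, hwpsupp, hwmsupp,
    hwpcard, hwmcard, le_of_lt (div_pos htm hts), le_of_lt (div_pos htp hts), ?_, ?_⟩
  · rw [← add_div, add_comm tm tp, div_self hts.ne']
  · funext i
    have e1 : wp i = x i + tp * (y i - z i) := hwpdef i
    have e2 : wm i = x i + tm * (z i - y i) := hwmdef i
    simp only [Pi.add_apply, Pi.smul_apply, smul_eq_mul, e1, e2]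
    field_simp
    ring

open scoped Classical in
/-- Every NS model lies in the convex hull of the extreme points of the NS polytope
whose support is contained in its own support. -/
private lemma main_hull {M : Finset (Finset X)} :
    ∀ (n : ℕ) (x : Coord (X := X) M O → ℝ), IsNSModel x →
      (Finset.univ.filter fun i => x i ≠ 0).card ≤ n →
      x ∈ convexHull ℝ {v | v ∈ Set.extremePoints ℝ
        {w : Coord (X := X) M O → ℝ | IsNSModel w} ∧ ∀ i, x i = 0 → v i = 0} := by
  intro n
  induction n with
  | zero =>
    intro x hx hc
    by_cases hex : x ∈ Set.extremePoints ℝ {v : Coord (X := X) M O → ℝ | IsNSModel v}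
    · exact subset_convexHull ℝ _ ⟨hex, fun i h => h⟩
    · obtain ⟨x₁, x₂, a, b, h₁, h₂, hs₁, hs₂, hc₁, hc₂, ha, hb, hab, hcomb⟩ := shrink hx hex
      exfalso; omega
  | succ n ih =>
    intro x hx hc
    by_cases hex : x ∈ Set.extremePoints ℝ {v : Coord (X := X) M O → ℝ | IsNSModel v}
    · exact subset_convexHull ℝ _ ⟨hex, fun i h => h⟩
    · obtain ⟨x₁, x₂, a, b, h₁, h₂, hs₁, hs₂, hc₁, hc₂, ha, hb, hab, hcomb⟩ := shrink hx hex
      have m₁ := ih x₁ h₁ (by omega)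
      have m₂ := ih x₂ h₂ (by omega)
      have sub₁ : {v | v ∈ Set.extremePoints ℝ
            {w : Coord (X := X) M O → ℝ | IsNSModel w} ∧ ∀ i, x₁ i = 0 → v i = 0} ⊆
          {v | v ∈ Set.extremePoints ℝ
            {w : Coord (X := X) M O → ℝ | IsNSModel w} ∧ ∀ i, x i = 0 → v i = 0} :=
        fun v hv => ⟨hv.1, fun i h => hv.2 i (hs₁ i h)⟩
      have sub₂ : {v | v ∈ Set.extremePoints ℝ
            {w : Coord (X := X) M O → ℝ | IsNSModel w} ∧ ∀ i, x₂ i = 0 → v i = 0} ⊆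
          {v | v ∈ Set.extremePoints ℝ
            {w : Coord (X := X) M O → ℝ | IsNSModel w} ∧ ∀ i, x i = 0 → v i = 0} :=
        fun v hv => ⟨hv.1, fun i h => hv.2 i (hs₂ i h)⟩
      have m₁' := convexHull_mono sub₁ m₁
      have m₂' := convexHull_mono sub₂ m₂
      have := (convex_convexHull ℝ _) m₁' m₂' ha hb hab
      rwa [hcomb] at this

theorem stmt16 {X O : Type*} [Fintype X] [DecidableEq X] [Fintype O] [DecidableEq O]
    (M : Finset (Finset X)) (N : Set (Coord (X := X) M O → ℝ))
    (hN : N = {v | IsNSModel v})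
    (e : Coord (X := X) M O → ℝ) (he : e ∈ N) (hSC : StronglyContextual e) :
    (∀ e' ∈ N, (∀ i, 0 < e' i → 0 < e i) → StronglyContextual e') ∧
    (∃ F : Set (Coord (X := X) M O → ℝ), IsFace N F ∧ e ∈ F ∧
      ∀ e' ∈ F, StronglyContextual e') ∧
    e ∈ convexHull ℝ {v ∈ Set.extremePoints ℝ N | StronglyContextual v} := by
  classical
  subst hN
  have heNS : IsNSModel e := he
  have part1 : ∀ e' ∈ {v : Coord (X := X) M O → ℝ | IsNSModel v},
      (∀ i, 0 < e' i → 0 < e i) → StronglyContextual e' := by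
    rintro e' _ hdom ⟨g, hg⟩
    exact hSC ⟨g, fun C => hdom _ (hg C)⟩
  refine ⟨part1, ?_, ?_⟩
  · refine ⟨{x ∈ {v : Coord (X := X) M O → ℝ | IsNSModel v} |
        ∑ i, (if e i = 0 then (1:ℝ) else 0) * x i = 0},
      ⟨fun i => if e i = 0 then 1 else 0, 0, fun x hx => Finset.sum_nonneg fun i _ => ?_, rfl⟩,
      ⟨he, Finset.sum_eq_zero fun i _ => ?_⟩, ?_⟩
    · dsimp only
      split_ifs with h
      · simpa using hx.1 i
      · simp
    · split_ifs with h <;> simp [h]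
    · rintro e' ⟨he'', hzero⟩
      refine part1 e' he'' fun i hpos => ?_
      have hterm := (Finset.sum_eq_zero_iff_of_nonneg fun j _ => ?_).mp hzero i (Finset.mem_univ i)
      · by_cases h : e i = 0
        · rw [if_pos h, one_mul] at hterm
          exact absurd hterm hpos.ne'
        · exact lt_of_le_of_ne (heNS.1 i) (Ne.symm h)
      · split_ifs with h
        · simpa using he''.1 j
        · simp
  · have hmain := main_hull (M := M)
      (Finset.univ.filter fun i => e i ≠ 0).card e heNS le_rfl
    refine convexHull_mono ?_ hmain
    rintro v ⟨hvext, hvsupp⟩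
    refine ⟨hvext, part1 v (extremePoints_subset hvext) fun i hpos => ?_⟩
    have hne : e i ≠ 0 := fun h => hpos.ne' (hvsupp i h)
    exact lt_of_le_of_ne (heNS.1 i) (Ne.symm hne)
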